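/- Let ε_1, ..., ε_n, ε_{n+1} be real-valued exchangeable random variables with no ties almost surely, let α ∈ (1/(n+1), 1), and let q̂ = ε_{(⌈(n+1)(1−α)⌉)} be the ⌈(n+1)(1−α)⌉-th order statistic of ε_1, ..., ε_n (equivalently, the ⌈(n+1)(1−α)⌉/n empirical quantile of {ε_1, ..., ε_n}). Then P(ε_{n+1} ≤ q̂) = ⌈(n+1)(1−α)⌉/(n+1). -/

import Mathlib

open MeasureTheory

/-- A finite family of random variables is exchangeable if every permutation of the
indices leaves the joint distribution unchanged. -/
def Exchangeable {Ω 𝒵 : Type*} [MeasurableSpace Ω] [MeasurableSpace 𝒵]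
    (μ : Measure Ω) {n : ℕ} (Z : Fin n → Ω → 𝒵) : Prop :=
  ∀ π : Equiv.Perm (Fin n),
    Measure.map (fun ω => fun i => Z (π i) ω) μ = Measure.map (fun ω => fun i => Z i ω) μ

/-- The `k`-th order statistic (0-indexed) of the values `v 0, ..., v (m-1)`:
the `(k+1)`-th smallest value. -/
noncomputable def orderStat {m : ℕ} (v : Fin m → ℝ) (k : Fin m) : ℝ :=
  ((List.ofFn v).insertionSort (· ≤ ·)).get
    (Fin.cast (by simp) k)

/-- rank of `v i` among all entries of `v`: number of entries `≤ v i`. -/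
noncomputable def rnk {m : ℕ} (v : Fin m → ℝ) (i : Fin m) : ℕ :=
  (Finset.univ.filter (fun j => v j ≤ v i)).card

lemma rnk_pos {m : ℕ} (v : Fin m → ℝ) (i : Fin m) : 1 ≤ rnk v i :=
  Finset.card_pos.mpr ⟨i, by simp [Finset.mem_filter]⟩

lemma rnk_le {m : ℕ} (v : Fin m → ℝ) (i : Fin m) : rnk v i ≤ m := by
  simpa [rnk] using Finset.card_filter_le Finset.univ (fun j => v j ≤ v i)

lemma rnk_injective {m : ℕ} {v : Fin m → ℝ} (hv : Function.Injective v) :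
    Function.Injective (rnk v) := by
  intro i j hij
  by_contra hne
  have hvne : v i ≠ v j := fun h => hne (hv h)
  wlog hlt : v i < v j generalizing i j
  · exact this hij.symm (fun h => hne h.symm) hvne.symm (hvne.lt_or_gt.resolve_left hlt)
  have hss : Finset.univ.filter (fun l => v l ≤ v i) ⊂
      Finset.univ.filter (fun l => v l ≤ v j) := by
    refine Finset.ssubset_iff_of_subset ?_ |>.mpr ⟨j, by simp, by simp [not_le, hlt]⟩
    intro l hl
    simp only [Finset.mem_filter, Finset.mem_univ, true_and] at hl ⊢
    exact hl.trans hlt.le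
  exact absurd hij (Nat.ne_of_lt (Finset.card_lt_card hss))

lemma rnk_comp_perm {m : ℕ} (v : Fin m → ℝ) (π : Equiv.Perm (Fin m)) (j : Fin m) :
    rnk (fun i => v (π i)) j = rnk v (π j) := by
  unfold rnk
  refine Finset.card_bij' (fun l _ => π l) (fun l _ => π.symm l) ?_ ?_ ?_ ?_ <;>
    intro l hl <;>
    simp only [Finset.mem_filter, Finset.mem_univ, true_and, Equiv.apply_symm_apply,
      Equiv.symm_apply_apply] at hl ⊢ <;> simpa using hl

lemma rnk_surj {m : ℕ} {v : Fin m → ℝ} (hv : Function.Injective v)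
    {r : ℕ} (h1 : 1 ≤ r) (h2 : r ≤ m) : ∃ i, rnk v i = r := by
  have hm : 0 < m := lt_of_lt_of_le h1 h2
  set f : Fin m → Fin m := fun i => ⟨rnk v i - 1, by
    have := rnk_le v i; have := rnk_pos v i; omega⟩ with hf
  have hfinj : Function.Injective f := by
    intro a b hab
    apply rnk_injective hv
    have := congrArg Fin.val hab
    simp only [hf] at this
    have ha := rnk_pos v a; have hb := rnk_pos v b
    omega
  have hfsurj := Finite.surjective_of_injective hfinj
  obtain ⟨i, hi⟩ := hfsurj ⟨r - 1, by omega⟩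
  refine ⟨i, ?_⟩
  have := congrArg Fin.val hi
  simp only [hf] at this
  have := rnk_pos v i
  omega

lemma measurable_rnk {m : ℕ} (i : Fin m) : Measurable (fun v : Fin m → ℝ => rnk v i) := by
  unfold rnk
  simp_rw [Finset.card_filter]
  refine Finset.measurable_sum _ (fun j _ => ?_)
  refine Measurable.ite ?_ measurable_const measurable_const
  exact measurableSet_le (measurable_pi_apply j) (measurable_pi_apply i)

lemma countP_ofFn {n : ℕ} (w : Fin n → ℝ) (q : ℝ → Prop) [DecidablePred q] :
    (List.ofFn w).countP (fun y => decide (q y)) =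
      (Finset.univ.filter (fun i => q (w i))).card := by
  rw [List.ofFn_eq_map, List.countP_map]
  rw [show ((fun y => decide (q y)) ∘ w) = fun i => decide (q (w i)) from rfl]
  rw [List.countP_eq_length_filter,
    ← List.toFinset_card_of_nodup ((List.nodup_finRange n).filter _),
    List.toFinset_filter, List.toFinset_finRange]
  simp

lemma sorted_le_get_iff {l : List ℝ} (hl : l.Pairwise (· ≤ ·)) {m : ℕ} (hm : m < l.length)
    (x : ℝ) : x ≤ l.get ⟨m, hm⟩ ↔ l.countP (fun y => decide (y < x)) ≤ m := by
  constructor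
  · intro hx
    have hsplit : l.countP (fun y => decide (y < x)) =
        (l.take m).countP (fun y => decide (y < x)) +
        (l.drop m).countP (fun y => decide (y < x)) := by
      rw [← List.countP_append, List.take_append_drop]
    have hdrop : (l.drop m).countP (fun y => decide (y < x)) = 0 := by
      rw [List.countP_eq_zero]
      intro y hy
      obtain ⟨j, hj, rfl⟩ := List.mem_iff_get.mp hy
      have : l.get ⟨m, hm⟩ ≤ (l.drop m).get j := by
        rw [show (l.drop m).get j = l.get ⟨m + j, by have := j.isLt; simp at this; omega⟩ from by simp]
        exact hl.rel_get_of_le (by simp [Fin.le_def])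
      simp only [decide_eq_true_eq, not_lt]
      exact hx.trans this
    have htake : (l.take m).countP (fun y => decide (y < x)) ≤ m :=
      le_trans List.countP_le_length (by simp)
    omega
  · intro hc
    by_contra hx
    push_neg at hx
    have hlen : (l.take (m+1)).length = m + 1 := by simp; omega
    have htake : (l.take (m+1)).countP (fun y => decide (y < x)) = m + 1 := by
      rw [List.countP_eq_length.mpr, hlen]
      intro y hy
      obtain ⟨j, hj, rfl⟩ := List.mem_iff_get.mp hy
      have : (l.take (m+1)).get j ≤ l.get ⟨m, hm⟩ := by
        rw [show (l.take (m+1)).get j = l.get ⟨j, by have := j.isLt; simp at this; omega⟩ from by simp]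
        refine hl.rel_get_of_le ?_
        simp only [Fin.le_def]
        have hj2 := j.isLt
        simp only [List.length_take] at hj2
        omega
      simp only [decide_eq_true_eq]
      exact lt_of_le_of_lt this hx
    have hsplit : l.countP (fun y => decide (y < x)) =
        (l.take (m+1)).countP (fun y => decide (y < x)) +
        (l.drop (m+1)).countP (fun y => decide (y < x)) := by
      rw [← List.countP_append, List.take_append_drop]
    omega

lemma le_orderStat_iff_count {n : ℕ} (w : Fin n → ℝ) (x : ℝ)
    (k : ℕ) (h1 : 1 ≤ k) (h2 : k ≤ n) :
    x ≤ orderStat w ⟨k - 1, by omega⟩ ↔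
      (Finset.univ.filter (fun i => w i < x)).card ≤ k - 1 := by
  have hlen : ((List.ofFn w).insertionSort (· ≤ ·)).length = n := by simp
  have hsorted : ((List.ofFn w).insertionSort (· ≤ ·)).Pairwise (· ≤ ·) :=
    List.pairwise_insertionSort _ _
  have hm : k - 1 < ((List.ofFn w).insertionSort (· ≤ ·)).length := by omega
  have horder : orderStat w ⟨k - 1, by omega⟩ =
      ((List.ofFn w).insertionSort (· ≤ ·)).get ⟨k - 1, hm⟩ := rfl
  rw [horder, sorted_le_get_iff hsorted hm x,
    (List.perm_insertionSort (· ≤ ·) (List.ofFn w)).countP_eq,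
    countP_ofFn w (fun y => y < x)]

lemma rnk_last_eq {n : ℕ} (v : Fin (n+1) → ℝ) (hv : Function.Injective v) :
    rnk v (Fin.last n) =
      (Finset.univ.filter (fun i : Fin n => v i.castSucc < v (Fin.last n))).card + 1 := by
  unfold rnk
  rw [Finset.card_filter, Fin.sum_univ_castSucc, Finset.card_filter]
  simp only [le_refl, if_true]
  congr 1
  refine Finset.sum_congr rfl (fun i _ => ?_)
  have hne : v i.castSucc ≠ v (Fin.last n) :=
    fun h => absurd (hv h) (Fin.castSucc_lt_last i).ne
  exact if_congr hne.le_iff_lt rfl rfl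

lemma le_orderStat_iff_rnk {n : ℕ} (v : Fin (n+1) → ℝ) (hv : Function.Injective v)
    (k : ℕ) (h1 : 1 ≤ k) (h2 : k ≤ n) :
    (v (Fin.last n) ≤ orderStat (fun i : Fin n => v i.castSucc) ⟨k - 1, by omega⟩ ↔
      rnk v (Fin.last n) ≤ k) := by
  rw [le_orderStat_iff_count _ _ k h1 h2, rnk_last_eq v hv]
  omega

/-- If `ε 1, ..., ε n, ε (n+1)` are exchangeable real random variables with no ties
almost surely, `α ∈ (1/(n+1), 1)`, and `q̂` is the `⌈(n+1)(1-α)⌉`-th order statistic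
(1-indexed) of the first `n` of them, then `P(ε (n+1) ≤ q̂) = ⌈(n+1)(1-α)⌉ / (n+1)`. -/
theorem prob_le_empirical_quantile {Ω : Type*} [MeasurableSpace Ω]
    (μ : Measure Ω) [IsProbabilityMeasure μ] {n : ℕ}
    (ε : Fin (n + 1) → Ω → ℝ) (hmeas : ∀ i, Measurable (ε i))
    (hexch : Exchangeable μ ε)
    (hties : ∀ i j, i ≠ j → μ {ω | ε i ω = ε j ω} = 0)
    (α : ℝ) (hα1 : 1 / ((n : ℝ) + 1) < α) (hα2 : α < 1) :
    μ {ω | ε (Fin.last n) ω ≤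
        orderStat (fun i : Fin n => ε i.castSucc ω)
          ⟨⌈((n : ℝ) + 1) * (1 - α)⌉₊ - 1, by
            have hn : (0 : ℝ) < (n : ℝ) + 1 := by positivity
            have h1 : (1 : ℝ) < α * ((n : ℝ) + 1) := (div_lt_iff₀ hn).mp hα1
            have hx : ((n : ℝ) + 1) * (1 - α) < (n : ℝ) := by nlinarith
            have hceil : ⌈((n : ℝ) + 1) * (1 - α)⌉₊ ≤ n := Nat.ceil_le.mpr hx.le
            have hpos : 0 < ⌈((n : ℝ) + 1) * (1 - α)⌉₊ := by
              rw [Nat.ceil_pos]; nlinarith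
            omega⟩} =
      ((⌈((n : ℝ) + 1) * (1 - α)⌉₊ : ENNReal)) / ((n : ENNReal) + 1) := by
  -- bounds on k
  set k : ℕ := ⌈((n : ℝ) + 1) * (1 - α)⌉₊ with hkdef
  have hn : (0 : ℝ) < (n : ℝ) + 1 := by positivity
  have h1' : (1 : ℝ) < α * ((n : ℝ) + 1) := (div_lt_iff₀ hn).mp hα1
  have hx : ((n : ℝ) + 1) * (1 - α) < (n : ℝ) := by nlinarith
  have hk2 : k ≤ n := Nat.ceil_le.mpr hx.le
  have hk1 : 1 ≤ k := by
    rw [hkdef, Nat.one_le_iff_ne_zero, ← Nat.pos_iff_ne_zero, Nat.ceil_pos]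
    have h1α : (0 : ℝ) < 1 - α := by linarith
    positivity
  -- the joint map
  set F : Ω → (Fin (n + 1) → ℝ) := fun ω i => ε i ω with hFdef
  have hF : Measurable F := measurable_pi_lambda _ hmeas
  -- the rank events
  set A : Fin (n + 1) → ℕ → Set Ω := fun i r => {ω | rnk (F ω) i = r} with hAdef
  have hAmeas : ∀ i r, MeasurableSet (A i r) := fun i r =>
    ((measurable_rnk i).comp hF) (measurableSet_singleton r)
  -- exchangeability: all ranks equally likely
  have hAeq : ∀ i j r, μ (A i r) = μ (A j r) := by
    intro i j r
    have hS : MeasurableSet {v : Fin (n + 1) → ℝ | rnk v j = r} :=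
      measurable_rnk j (measurableSet_singleton r)
    set π := Equiv.swap i j with hπ
    have hπmeas : Measurable (fun ω => fun l => ε (π l) ω) :=
      measurable_pi_lambda _ (fun l => hmeas (π l))
    have hpre : (fun ω => fun l => ε (π l) ω) ⁻¹' {v | rnk v j = r} = A (π j) r := by
      ext ω
      simp only [Set.mem_preimage, Set.mem_setOf_eq, hAdef]
      rw [show (fun l => ε (π l) ω) = (fun l => F ω (π l)) from rfl, rnk_comp_perm (F ω) π j]
    have h1 := Measure.map_apply (μ := μ) hπmeas hS
    have h2 := Measure.map_apply (μ := μ) hF hS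
    rw [hexch π] at h1
    have : μ (A (π j) r) = μ (A j r) := by
      rw [← hpre, ← h1, show (fun ω (i : Fin (n + 1)) => ε i ω) = F from rfl, h2]
      rfl
    rwa [hπ, Equiv.swap_apply_right] at this
  -- the null set of ties
  set N : Set Ω := ⋃ (i : Fin (n + 1)) (j : Fin (n + 1)) (_ : i ≠ j),
    {ω | ε i ω = ε j ω} with hNdef
  have hNmeas : MeasurableSet N :=
    MeasurableSet.iUnion fun i => MeasurableSet.iUnion fun j =>
      MeasurableSet.iUnion fun _ => measurableSet_eq_fun (hmeas i) (hmeas j)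
  have hNnull : μ N = 0 := by
    refine measure_iUnion_null fun i => measure_iUnion_null fun j => ?_
    by_cases h : i = j
    · simp [h]
    · simpa [h] using hties i j h
  have hinj : ∀ ω, ω ∉ N → Function.Injective (F ω) := by
    intro ω hω a b hab
    by_contra hne
    exact hω (Set.mem_iUnion.mpr ⟨a, Set.mem_iUnion.mpr ⟨b,
      Set.mem_iUnion.mpr ⟨hne, hab⟩⟩⟩)
  have hμcompl : μ Nᶜ = 1 := by
    rw [measure_compl hNmeas (measure_ne_top μ N), hNnull, measure_univ, tsub_zero]
  have hinterN : ∀ s : Set Ω, μ (s ∩ Nᶜ) = μ s := by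
    intro s
    have := measure_inter_add_diff s hNmeas.compl (μ := μ)
    have hdiff : μ (s \ Nᶜ) = 0 :=
      measure_mono_null (fun ω hω => by simpa using hω.2) hNnull
    rw [hdiff, add_zero] at this
    exact this
  -- each rank value has probability 1/(n+1)
  have huni : ∀ i r, 1 ≤ r → r ≤ n + 1 → μ (A i r) = ((n : ENNReal) + 1)⁻¹ := by
    intro i r hr1 hr2
    have hsum : ∑ j : Fin (n + 1), μ (A j r) = 1 := by
      have hdisj : Pairwise (Function.onFun Disjoint fun j => A j r ∩ Nᶜ) := by
        intro a b hab
        refine Set.disjoint_left.mpr fun ω hωa hωb => hab ?_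
        exact rnk_injective (hinj ω hωa.2) (hωa.1.trans hωb.1.symm)
      have hmeas' : ∀ j, MeasurableSet (A j r ∩ Nᶜ) :=
        fun j => (hAmeas j r).inter hNmeas.compl
      have hcover : (⋃ j, A j r ∩ Nᶜ) = Nᶜ := by
        ext ω
        simp only [Set.mem_iUnion, Set.mem_inter_iff]
        constructor
        · rintro ⟨j, _, h⟩; exact h
        · intro hω
          obtain ⟨j, hj⟩ := rnk_surj (hinj ω hω) hr1 hr2
          exact ⟨j, hj, hω⟩
      calc ∑ j : Fin (n + 1), μ (A j r) = ∑ j : Fin (n + 1), μ (A j r ∩ Nᶜ) := by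
            simp_rw [hinterN]
        _ = μ (⋃ j, A j r ∩ Nᶜ) := by
            rw [measure_iUnion hdisj hmeas', tsum_fintype]
        _ = 1 := by rw [hcover, hμcompl]
    have hconst : ∑ j : Fin (n + 1), μ (A j r) = (n + 1 : ℕ) * μ (A i r) := by
      rw [Finset.sum_congr rfl (fun j _ => hAeq j i r), Finset.sum_const,
        Finset.card_univ, Fintype.card_fin, nsmul_eq_mul]
    rw [hconst] at hsum
    have hne0 : ((n + 1 : ℕ) : ENNReal) ≠ 0 := by simp
    have hnetop : ((n + 1 : ℕ) : ENNReal) ≠ ⊤ := by simp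
    have := congrArg (fun x => ((n + 1 : ℕ) : ENNReal)⁻¹ * x) hsum
    simp only [← mul_assoc, ENNReal.inv_mul_cancel hne0 hnetop, one_mul, mul_one] at this
    rw [this]
    congr 1
    push_cast
    ring
  -- identify the target event with a union of rank events
  set T : Set Ω := {ω | ε (Fin.last n) ω ≤
      orderStat (fun i : Fin n => ε i.castSucc ω)
        ⟨k - 1, by omega⟩} with hTdef
  have hTeq : T ∩ Nᶜ = (⋃ r ∈ Finset.Icc 1 k, A (Fin.last n) r) ∩ Nᶜ := by
    ext ω
    simp only [Set.mem_inter_iff, Set.mem_setOf_eq, Set.mem_iUnion, hTdef, hAdef,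
      Finset.mem_Icc, and_congr_left_iff]
    intro hω
    have hvinj := hinj ω hω
    have := le_orderStat_iff_rnk (F ω) hvinj k hk1 hk2
    rw [show (fun i : Fin n => ε i.castSucc ω) = (fun i : Fin n => F ω i.castSucc)
      from rfl, show ε (Fin.last n) ω = F ω (Fin.last n) from rfl, this]
    have hge := rnk_pos (F ω) (Fin.last n)
    constructor
    · intro h; exact ⟨rnk (F ω) (Fin.last n), ⟨hge, h⟩, rfl⟩
    · rintro ⟨r, ⟨_, hr2⟩, hr⟩; omega
  have hmain : μ T = μ (⋃ r ∈ Finset.Icc 1 k, A (Fin.last n) r) := by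
    rw [← hinterN T, hTeq, hinterN]
  have hdisj2 : (↑(Finset.Icc 1 k) : Set ℕ).PairwiseDisjoint
      (fun r => A (Fin.last n) r) := by
    intro a _ b _ hab
    refine Set.disjoint_left.mpr fun ω hωa hωb => hab ?_
    exact hωa.symm.trans hωb
  have hval : μ (⋃ r ∈ Finset.Icc 1 k, A (Fin.last n) r) =
      (k : ENNReal) / ((n : ENNReal) + 1) := by
    rw [measure_biUnion_finset hdisj2 (fun r _ => hAmeas _ r)]
    have hconst : ∀ r ∈ Finset.Icc 1 k, μ (A (Fin.last n) r) = ((n : ENNReal) + 1)⁻¹ := by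
      intro r hr
      rw [Finset.mem_Icc] at hr
      exact huni _ r hr.1 (by omega)
    rw [Finset.sum_congr rfl hconst, Finset.sum_const, Nat.card_Icc]
    simp only [Nat.add_sub_cancel, nsmul_eq_mul]
    rw [ENNReal.div_eq_inv_mul, mul_comm]
  exact hmain.trans hval
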